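/- For the MMD functional with negative distance kernel and any ν ∈ P₂(ℝ), the functional F_ν(u) := ∫₀¹ [(1-2s)u(s) + ∫₀¹ |u(s) - Q_ν(t)| dt] ds on L²(0,1) satisfies F_ν(Q_ν) ≤ F_ν(Q_μ) for all μ ∈ P₂(ℝ), i.e., Q_ν minimizes F_ν over the cone of quantile functions; equivalently, MMD²_K(μ,ν) = F_ν(Q_μ) - F_ν(Q_ν) ≥ 0 with equality iff μ = ν, where K(x,y) = -|x-y|. -/

import Mathlib

open MeasureTheory Set Filter ProbabilityTheory
open scoped Topology ENNReal

noncomputable def Rplus (μ : Measure ℝ) (x : ℝ) : ℝ := (μ (Iic x)).toReal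

noncomputable def Quant (μ : Measure ℝ) (s : ℝ) : ℝ := sInf {x : ℝ | s ≤ Rplus μ x}

section Quantile
variable (μ : Measure ℝ) [IsProbabilityMeasure μ]

lemma Rplus_eq_cdf (x : ℝ) : Rplus μ x = cdf μ x := (cdf_eq_real μ x).symm

lemma quant_set_nonempty {s : ℝ} (hs : s < 1) : {x : ℝ | s ≤ Rplus μ x}.Nonempty := by
  obtain ⟨y, hy⟩ := ((tendsto_cdf_atTop μ).eventually (eventually_ge_nhds hs)).exists
  exact ⟨y, by rwa [mem_setOf_eq, Rplus_eq_cdf]⟩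

lemma quant_set_bddBelow {s : ℝ} (hs : 0 < s) : BddBelow {x : ℝ | s ≤ Rplus μ x} := by
  obtain ⟨y, hy⟩ := ((tendsto_cdf_atBot μ).eventually (eventually_lt_nhds hs)).exists
  refine ⟨y, fun z hz => ?_⟩
  rw [mem_setOf_eq, Rplus_eq_cdf] at hz
  by_contra h
  exact absurd (hz.trans (monotone_cdf μ (le_of_not_ge h))) (not_le.2 hy)

lemma quant_le_iff {s : ℝ} (hs : s ∈ Ioo (0:ℝ) 1) (x : ℝ) :
    Quant μ s ≤ x ↔ s ≤ cdf μ x := by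
  constructor
  · intro h
    have key : ∀ y, x < y → s ≤ cdf μ y := by
      intro y hy
      have : sInf {x : ℝ | s ≤ Rplus μ x} < y := lt_of_le_of_lt h hy
      rw [csInf_lt_iff (quant_set_bddBelow μ hs.1) (quant_set_nonempty μ hs.2)] at this
      obtain ⟨z, hz, hzy⟩ := this
      rw [mem_setOf_eq, Rplus_eq_cdf] at hz
      exact hz.trans (monotone_cdf μ hzy.le)
    have hcont : Tendsto (cdf μ) (𝓝[>] x) (𝓝 (cdf μ x)) :=
      ((cdf μ).right_continuous x).mono_left (nhdsWithin_mono x Ioi_subset_Ici_self)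
    exact ge_of_tendsto hcont (eventually_mem_nhdsWithin.mono key)
  · intro h
    exact csInf_le (quant_set_bddBelow μ hs.1) (by rwa [mem_setOf_eq, Rplus_eq_cdf])

lemma quant_monotoneOn : MonotoneOn (Quant μ) (Ioo (0:ℝ) 1) := by
  intro s hs t ht hst
  exact le_csInf (quant_set_nonempty μ ht.2)
    (fun x hx => csInf_le (quant_set_bddBelow μ hs.1)
      (mem_setOf_eq ▸ hst.trans hx))

lemma quant_aemeasurable : AEMeasurable (Quant μ) (volume.restrict (Ioo (0:ℝ) 1)) :=
  aemeasurable_restrict_of_monotoneOn measurableSet_Ioo (quant_monotoneOn μ)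

lemma map_quant : (volume.restrict (Ioo (0:ℝ) 1)).map (Quant μ) = μ := by
  have hprob : IsProbabilityMeasure ((volume.restrict (Ioo (0:ℝ) 1)).map (Quant μ)) := by
    constructor
    rw [Measure.map_apply_of_aemeasurable (quant_aemeasurable μ) MeasurableSet.univ]
    simp [Real.volume_Ioo]
  refine Measure.ext_of_Iic _ μ (fun x => ?_)
  rw [Measure.map_apply_of_aemeasurable (quant_aemeasurable μ) measurableSet_Iic,
    Measure.restrict_apply' measurableSet_Ioo]
  have hset : (Quant μ) ⁻¹' (Iic x) ∩ Ioo 0 1 = Iic (cdf μ x) ∩ Ioo 0 1 := by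
    ext s
    simp only [mem_inter_iff, mem_preimage, mem_Iic, and_congr_left_iff]
    intro hs
    rw [quant_le_iff μ hs]
  rw [hset, ← ofReal_cdf μ x]
  rcases eq_or_lt_of_le (cdf_le_one μ x) with h1 | h1
  · have : Iic (cdf μ x) ∩ Ioo (0:ℝ) 1 = Ioo (0:ℝ) 1 := by
      refine inter_eq_right.2 (fun s hs => ?_)
      exact mem_Iic.2 (by rw [h1]; exact hs.2.le)
    rw [this, Real.volume_Ioo, h1]
    norm_num
  · have : Iic (cdf μ x) ∩ Ioo (0:ℝ) 1 = Ioc (0:ℝ) (cdf μ x) := by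
      ext s
      simp only [mem_inter_iff, mem_Iic, mem_Ioo, mem_Ioc]
      constructor
      · rintro ⟨h, h0, _⟩; exact ⟨h0, h⟩
      · rintro ⟨h0, h⟩; exact ⟨h, h0, lt_of_le_of_lt h h1⟩
    rw [this, Real.volume_Ioc, sub_zero]

lemma integral_quant (f : ℝ → ℝ) (hf : AEStronglyMeasurable f μ) :
    ∫ s in Ioo (0:ℝ) 1, f (Quant μ s) = ∫ x, f x ∂μ := by
  conv_rhs => rw [← map_quant μ]
  rw [integral_map (quant_aemeasurable μ) (by rwa [map_quant])]

lemma integrable_quant_comp (f : ℝ → ℝ) (hf : Integrable f μ) :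
    Integrable (fun s => f (Quant μ s)) (volume.restrict (Ioo (0:ℝ) 1)) := by
  have := (integrable_map_measure (g := f) (f := Quant μ)
    (by rw [map_quant]; exact hf.aestronglyMeasurable)
    (quant_aemeasurable μ)).1 (by rwa [map_quant])
  exact this

end Quantile

section Moments
variable (μ : Measure ℝ) [IsProbabilityMeasure μ]

lemma integrable_abs_of_sq (hμ : Integrable (fun x : ℝ => x ^ 2) μ) :
    Integrable (fun x : ℝ => |x|) μ := by
  refine Integrable.mono' ((hμ.add (integrable_const 1)).div_const 2)
    (measurable_abs).aestronglyMeasurable (ae_of_all _ (fun x => ?_))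
  rw [Real.norm_eq_abs, abs_abs]
  have h := sq_nonneg (|x| - 1)
  have h2 : |x| ^ 2 = x ^ 2 := sq_abs x
  simp only [Pi.add_apply]
  nlinarith

lemma integrable_id_of_sq (hμ : Integrable (fun x : ℝ => x ^ 2) μ) :
    Integrable (fun x : ℝ => x) μ := by
  refine Integrable.mono' (integrable_abs_of_sq μ hμ) measurable_id.aestronglyMeasurable
    (ae_of_all _ (fun x => le_of_eq (Real.norm_eq_abs x)))

end Moments

section Dfun
variable (α β : Measure ℝ) [IsProbabilityMeasure α] [IsProbabilityMeasure β]

lemma integrable_fst_abs (hα : Integrable (fun x : ℝ => |x|) α) :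
    Integrable (fun p : ℝ × ℝ => |p.1|) (α.prod β) := by
  have hmap : (α.prod β).map Prod.fst = α := by
    rw [Measure.map_fst_prod]; simp
  have := (integrable_map_measure (g := fun x : ℝ => |x|) (f := Prod.fst)
    (by rw [hmap]; exact hα.aestronglyMeasurable)
    measurable_fst.aemeasurable).1 (by rwa [hmap])
  exact this

lemma integrable_snd_abs (hβ : Integrable (fun x : ℝ => |x|) β) :
    Integrable (fun p : ℝ × ℝ => |p.2|) (α.prod β) := by
  have hmap : (α.prod β).map Prod.snd = β := by
    rw [Measure.map_snd_prod]; simp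
  have := (integrable_map_measure (g := fun x : ℝ => |x|) (f := Prod.snd)
    (by rw [hmap]; exact hβ.aestronglyMeasurable)
    measurable_snd.aemeasurable).1 (by rwa [hmap])
  exact this

lemma integrable_absdiff_prod (hα : Integrable (fun x : ℝ => |x|) α)
    (hβ : Integrable (fun x : ℝ => |x|) β) :
    Integrable (fun p : ℝ × ℝ => |p.1 - p.2|) (α.prod β) := by
  refine Integrable.mono' ((integrable_fst_abs α β hα).add (integrable_snd_abs α β hβ))
    ((measurable_fst.sub measurable_snd).abs).aestronglyMeasurable
    (ae_of_all _ (fun p => ?_))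
  rw [Real.norm_eq_abs, abs_abs]
  exact (abs_sub _ _)

/-- `h β x = ∫ y, |x - y| dβ`. -/
noncomputable def hfun (β : Measure ℝ) (x : ℝ) : ℝ := ∫ y, |x - y| ∂β

lemma integrable_absdiff_right (hβ : Integrable (fun x : ℝ => |x|) β) (x : ℝ) :
    Integrable (fun y => |x - y|) β := by
  refine Integrable.mono' (hβ.add (integrable_const |x|))
    ((measurable_const.sub measurable_id).abs).aestronglyMeasurable
    (ae_of_all _ (fun y => ?_))
  rw [Real.norm_eq_abs, abs_abs]
  calc |x - y| ≤ |x| + |y| := abs_sub _ _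
  _ = |y| + |x| := by ring

lemma lipschitz_hfun (hβ : Integrable (fun x : ℝ => |x|) β) :
    LipschitzWith 1 (hfun β) := by
  refine LipschitzWith.of_dist_le_mul (fun x x' => ?_)
  rw [Real.dist_eq, Real.dist_eq, NNReal.coe_one, one_mul]
  have h1 := integrable_absdiff_right β hβ x
  have h2 := integrable_absdiff_right β hβ x'
  rw [hfun, hfun, ← integral_sub h1 h2]
  calc |∫ y, (|x - y| - |x' - y|) ∂β| ≤ ∫ y, |(|x - y| - |x' - y|)| ∂β := by
        simpa [Real.norm_eq_abs] using norm_integral_le_integral_norm (fun y => |x - y| - |x' - y|)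
  _ ≤ ∫ _, |x - x'| ∂β := by
      refine integral_mono ((h1.sub h2).abs) (integrable_const _) (fun y => ?_)
      have := abs_abs_sub_abs_le_abs_sub (x - y) (x' - y)
      simpa using this
  _ = |x - x'| := by simp

lemma abs_hfun_le (hβ : Integrable (fun x : ℝ => |x|) β) (x : ℝ) :
    |hfun β x| ≤ |x| + ∫ y, |y| ∂β := by
  rw [hfun]
  calc |∫ y, |x - y| ∂β| ≤ ∫ y, |(|x - y|)| ∂β := by
        simpa [Real.norm_eq_abs] using norm_integral_le_integral_norm (fun y => |x - y|)
  _ ≤ ∫ y, (|x| + |y|) ∂β := by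
      refine integral_mono ((integrable_absdiff_right β hβ x).abs)
        ((integrable_const _).add hβ) (fun y => ?_)
      rw [abs_abs]; exact abs_sub _ _
  _ = |x| + ∫ y, |y| ∂β := by
      rw [integral_add (integrable_const _) hβ]; simp

lemma integrable_hfun (hα : Integrable (fun x : ℝ => |x|) α)
    (hβ : Integrable (fun x : ℝ => |x|) β) :
    Integrable (hfun β) α := by
  refine Integrable.mono' (hα.add (integrable_const (∫ y, |y| ∂β)))
    ((lipschitz_hfun β hβ).continuous).aestronglyMeasurable
    (ae_of_all _ (fun x => ?_))
  rw [Real.norm_eq_abs]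
  exact abs_hfun_le β hβ x

lemma D_eq_prod (hα : Integrable (fun x : ℝ => |x|) α)
    (hβ : Integrable (fun x : ℝ => |x|) β) :
    ∫ x, hfun β x ∂α = ∫ p : ℝ × ℝ, |p.1 - p.2| ∂(α.prod β) := by
  rw [integral_prod _ (integrable_absdiff_prod α β hα hβ)]
  rfl

end Dfun

section Cramer
variable (α β : Measure ℝ) [IsProbabilityMeasure α] [IsProbabilityMeasure β]

lemma ofReal_absdiff (x y : ℝ) :
    ENNReal.ofReal |x - y|
      = ∫⁻ t, ((Ico x y).indicator (fun _ => (1:ℝ≥0∞)) t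
          + (Ico y x).indicator (fun _ => (1:ℝ≥0∞)) t) ∂volume := by
  rw [lintegral_add_left (measurable_const.indicator measurableSet_Ico),
    lintegral_indicator_const measurableSet_Ico, lintegral_indicator_const measurableSet_Ico,
    Real.volume_Ico, Real.volume_Ico, one_mul, one_mul]
  rcases le_total x y with h | h
  · have h2 : ENNReal.ofReal (x - y) = 0 := ENNReal.ofReal_of_nonpos (by linarith)
    rw [h2, add_zero, abs_of_nonpos (by linarith), neg_sub]
  · have h2 : ENNReal.ofReal (y - x) = 0 := ENNReal.ofReal_of_nonpos (by linarith)
    rw [h2, zero_add, abs_of_nonneg (by linarith)]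

lemma lintegral_absdiff_prod :
    ∫⁻ p : ℝ × ℝ, ENNReal.ofReal |p.1 - p.2| ∂(α.prod β)
      = ∫⁻ t, (α (Iic t) * β (Ioi t) + α (Ioi t) * β (Iic t)) ∂volume := by
  set S1 : Set ((ℝ × ℝ) × ℝ) := {q | q.1.1 ≤ q.2 ∧ q.2 < q.1.2} with hS1
  set S2 : Set ((ℝ × ℝ) × ℝ) := {q | q.1.2 ≤ q.2 ∧ q.2 < q.1.1} with hS2
  have hS1m : MeasurableSet S1 :=
    (measurableSet_le (measurable_fst.fst) measurable_snd).inter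
      (measurableSet_lt measurable_snd (measurable_fst.snd))
  have hS2m : MeasurableSet S2 :=
    (measurableSet_le (measurable_fst.snd) measurable_snd).inter
      (measurableSet_lt measurable_snd (measurable_fst.fst))
  have m1 : ∀ (p : ℝ × ℝ) (t : ℝ), ((p, t) ∈ S1 ↔ t ∈ Ico p.1 p.2) := by
    intro p t; simp [hS1, mem_setOf_eq, mem_Ico]
  have m2 : ∀ (p : ℝ × ℝ) (t : ℝ), ((p, t) ∈ S2 ↔ t ∈ Ico p.2 p.1) := by
    intro p t; simp [hS2, mem_setOf_eq, mem_Ico]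
  have m1' : ∀ (p : ℝ × ℝ) (t : ℝ), ((p, t) ∈ S1 ↔ p ∈ Iic t ×ˢ Ioi t) := by
    intro p t; simp [hS1, mem_setOf_eq, mem_prod, mem_Iic, mem_Ioi]
  have m2' : ∀ (p : ℝ × ℝ) (t : ℝ), ((p, t) ∈ S2 ↔ p ∈ Ioi t ×ˢ Iic t) := by
    intro p t
    simp only [hS2, mem_setOf_eq, mem_prod, mem_Iic, mem_Ioi]
    tauto
  have hg : Measurable (fun q : (ℝ × ℝ) × ℝ =>
      S1.indicator (fun _ => (1:ℝ≥0∞)) q + S2.indicator (fun _ => (1:ℝ≥0∞)) q) :=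
    (measurable_const.indicator hS1m).add (measurable_const.indicator hS2m)
  have ind_eq : ∀ (S : Set ((ℝ × ℝ) × ℝ)) (T : Set ℝ) (p : ℝ × ℝ) (t : ℝ),
      ((p, t) ∈ S ↔ t ∈ T) →
      S.indicator (fun _ => (1:ℝ≥0∞)) (p, t) = T.indicator (fun _ => (1:ℝ≥0∞)) t := by
    intro S T p t h
    by_cases hm : (p, t) ∈ S
    · rw [indicator_of_mem hm, indicator_of_mem (h.1 hm)]
    · rw [indicator_of_notMem hm, indicator_of_notMem (fun ht => hm (h.2 ht))]
  have ind_eq' : ∀ (S : Set ((ℝ × ℝ) × ℝ)) (T : Set (ℝ × ℝ)) (p : ℝ × ℝ) (t : ℝ),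
      ((p, t) ∈ S ↔ p ∈ T) →
      S.indicator (fun _ => (1:ℝ≥0∞)) (p, t) = T.indicator (fun _ => (1:ℝ≥0∞)) p := by
    intro S T p t h
    by_cases hm : (p, t) ∈ S
    · rw [indicator_of_mem hm, indicator_of_mem (h.1 hm)]
    · rw [indicator_of_notMem hm, indicator_of_notMem (fun ht => hm (h.2 ht))]
  calc ∫⁻ p : ℝ × ℝ, ENNReal.ofReal |p.1 - p.2| ∂(α.prod β)
      = ∫⁻ p : ℝ × ℝ, ∫⁻ t, (S1.indicator (fun _ => (1:ℝ≥0∞)) ((p, t))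
          + S2.indicator (fun _ => (1:ℝ≥0∞)) ((p, t))) ∂volume ∂(α.prod β) := by
        refine lintegral_congr (fun p => ?_)
        rw [ofReal_absdiff]
        refine lintegral_congr (fun t => ?_)
        rw [ind_eq S1 _ p t (m1 p t), ind_eq S2 _ p t (m2 p t)]
  _ = ∫⁻ t, ∫⁻ p : ℝ × ℝ, (S1.indicator (fun _ => (1:ℝ≥0∞)) ((p, t))
          + S2.indicator (fun _ => (1:ℝ≥0∞)) ((p, t))) ∂(α.prod β) ∂volume :=
        lintegral_lintegral_swap hg.aemeasurable
  _ = ∫⁻ t, (α (Iic t) * β (Ioi t) + α (Ioi t) * β (Iic t)) ∂volume := by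
        refine lintegral_congr (fun t => ?_)
        have : ∀ p : ℝ × ℝ, (S1.indicator (fun _ => (1:ℝ≥0∞)) ((p, t))
            + S2.indicator (fun _ => (1:ℝ≥0∞)) ((p, t)))
            = ((Iic t ×ˢ Ioi t).indicator (fun _ => (1:ℝ≥0∞)) p
              + (Ioi t ×ˢ Iic t).indicator (fun _ => (1:ℝ≥0∞)) p) := by
          intro p
          rw [ind_eq' S1 _ p t (m1' p t), ind_eq' S2 _ p t (m2' p t)]
        rw [lintegral_congr this,
          lintegral_add_left
            (measurable_const.indicator (measurableSet_Iic.prod measurableSet_Ioi)),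
          lintegral_indicator_const (measurableSet_Iic.prod measurableSet_Ioi),
          lintegral_indicator_const (measurableSet_Ioi.prod measurableSet_Iic),
          one_mul, one_mul, Measure.prod_prod, Measure.prod_prod]

end Cramer

noncomputable def Gfun (α β : Measure ℝ) (t : ℝ) : ℝ :=
  cdf α t * (1 - cdf β t) + (1 - cdf α t) * cdf β t

section Gsec
variable (α β : Measure ℝ) [IsProbabilityMeasure α] [IsProbabilityMeasure β]

lemma Gfun_nonneg (t : ℝ) : 0 ≤ Gfun α β t :=
  add_nonneg (mul_nonneg (cdf_nonneg α t) (by linarith [cdf_le_one β t]))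
    (mul_nonneg (by linarith [cdf_le_one α t]) (cdf_nonneg β t))

lemma Gfun_measurable : Measurable (Gfun α β) :=
  (((monotone_cdf α).measurable).mul
    (measurable_const.sub (monotone_cdf β).measurable)).add
    ((measurable_const.sub (monotone_cdf α).measurable).mul (monotone_cdf β).measurable)

lemma measure_Ioi_eq (t : ℝ) : α (Ioi t) = ENNReal.ofReal (1 - cdf α t) := by
  have h1 : α (Ioi t) = α univ - α (Iic t) := by
    rw [← compl_Iic]
    exact measure_compl measurableSet_Iic (measure_ne_top α _)
  rw [h1, measure_univ, ← ofReal_cdf α t, ENNReal.ofReal_sub _ (cdf_nonneg α t),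
    ENNReal.ofReal_one]

lemma ofReal_Gfun (t : ℝ) :
    ENNReal.ofReal (Gfun α β t) = α (Iic t) * β (Ioi t) + α (Ioi t) * β (Iic t) := by
  rw [Gfun, ENNReal.ofReal_add (mul_nonneg (cdf_nonneg α t) (by linarith [cdf_le_one β t]))
      (mul_nonneg (by linarith [cdf_le_one α t]) (cdf_nonneg β t)),
    ENNReal.ofReal_mul (cdf_nonneg α t), ENNReal.ofReal_mul (by linarith [cdf_le_one α t]),
    ← ofReal_cdf α t, ← ofReal_cdf β t, ← measure_Ioi_eq α t, ← measure_Ioi_eq β t]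

lemma D_nonneg : 0 ≤ ∫ x, hfun β x ∂α :=
  integral_nonneg (fun x => integral_nonneg (fun y => abs_nonneg _))

lemma ofReal_D_eq (hα : Integrable (fun x : ℝ => |x|) α)
    (hβ : Integrable (fun x : ℝ => |x|) β) :
    ENNReal.ofReal (∫ x, hfun β x ∂α) = ∫⁻ t, ENNReal.ofReal (Gfun α β t) ∂volume := by
  rw [D_eq_prod α β hα hβ,
    ofReal_integral_eq_lintegral_ofReal (integrable_absdiff_prod α β hα hβ)
      (ae_of_all _ (fun p => abs_nonneg _))]
  simp_rw [ofReal_Gfun α β]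
  exact lintegral_absdiff_prod α β

lemma Gfun_integrable (hα : Integrable (fun x : ℝ => |x|) α)
    (hβ : Integrable (fun x : ℝ => |x|) β) :
    Integrable (Gfun α β) volume := by
  refine ⟨(Gfun_measurable α β).aestronglyMeasurable, ?_⟩
  rw [hasFiniteIntegral_iff_ofReal (ae_of_all _ (Gfun_nonneg α β))]
  rw [← ofReal_D_eq α β hα hβ]
  exact ENNReal.ofReal_lt_top

lemma Gfun_integral (hα : Integrable (fun x : ℝ => |x|) α)
    (hβ : Integrable (fun x : ℝ => |x|) β) :
    ∫ t, Gfun α β t = ∫ x, hfun β x ∂α := by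
  rw [integral_eq_lintegral_of_nonneg_ae (ae_of_all _ (Gfun_nonneg α β))
    (Gfun_measurable α β).aestronglyMeasurable, ← ofReal_D_eq α β hα hβ,
    ENNReal.toReal_ofReal (D_nonneg α β)]

end Gsec

section MMDsec
variable (μ ν : Measure ℝ) [IsProbabilityMeasure μ] [IsProbabilityMeasure ν]

/-- Restatement of the double integral of `-|x - y|`. -/
lemma neg_double_integral (α β : Measure ℝ) :
    (∫ x, (∫ y, -|x - y| ∂β) ∂α) = -∫ x, hfun β x ∂α := by
  simp_rw [hfun, ← integral_neg]

lemma MMD2_eq_combination :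
    (1 / 2) * (∫ x, (∫ y, -|x - y| ∂μ) ∂μ) - (∫ x, (∫ y, -|x - y| ∂ν) ∂μ) +
      (1 / 2) * (∫ x, (∫ y, -|x - y| ∂ν) ∂ν)
    = (∫ x, hfun ν x ∂μ) - (1/2) * (∫ x, hfun μ x ∂μ) - (1/2) * (∫ x, hfun ν x ∂ν) := by
  rw [neg_double_integral μ μ, neg_double_integral μ ν, neg_double_integral ν ν]
  ring

lemma sq_cdf_diff_eq (t : ℝ) :
    (cdf μ t - cdf ν t) ^ 2
      = Gfun μ ν t - (1/2) * Gfun μ μ t - (1/2) * Gfun ν ν t := by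
  simp only [Gfun]; ring

lemma sq_cdf_diff_integrable (hμ : Integrable (fun x : ℝ => |x|) μ)
    (hν : Integrable (fun x : ℝ => |x|) ν) :
    Integrable (fun t => (cdf μ t - cdf ν t) ^ 2) volume := by
  have h2' : Integrable (fun t => (1/2 : ℝ) * Gfun μ μ t) volume :=
    (Gfun_integrable μ μ hμ hμ).const_mul _
  have h3' : Integrable (fun t => (1/2 : ℝ) * Gfun ν ν t) volume :=
    (Gfun_integrable ν ν hν hν).const_mul _
  have h12 : Integrable (fun t => Gfun μ ν t - (1/2) * Gfun μ μ t) volume :=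
    (Gfun_integrable μ ν hμ hν).sub h2'
  have h123 : Integrable
      (fun t => Gfun μ ν t - (1/2) * Gfun μ μ t - (1/2) * Gfun ν ν t) volume := h12.sub h3'
  refine Integrable.congr h123 (ae_of_all _ (fun t => ?_))
  simp only [Gfun]; ring

lemma MMD2_eq_integral_sq (hμ : Integrable (fun x : ℝ => |x|) μ)
    (hν : Integrable (fun x : ℝ => |x|) ν) :
    (1 / 2) * (∫ x, (∫ y, -|x - y| ∂μ) ∂μ) - (∫ x, (∫ y, -|x - y| ∂ν) ∂μ) +
      (1 / 2) * (∫ x, (∫ y, -|x - y| ∂ν) ∂ν)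
    = ∫ t, (cdf μ t - cdf ν t) ^ 2 ∂volume := by
  rw [MMD2_eq_combination μ ν]
  have h1 := Gfun_integrable μ ν hμ hν
  have h2' : Integrable (fun t => (1/2 : ℝ) * Gfun μ μ t) volume :=
    (Gfun_integrable μ μ hμ hμ).const_mul _
  have h3' : Integrable (fun t => (1/2 : ℝ) * Gfun ν ν t) volume :=
    (Gfun_integrable ν ν hν hν).const_mul _
  have h12 : Integrable (fun t => Gfun μ ν t - (1/2) * Gfun μ μ t) volume := h1.sub h2'
  have heq : ∫ t, (cdf μ t - cdf ν t) ^ 2 ∂volume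
      = ∫ t, (Gfun μ ν t - (1/2) * Gfun μ μ t - (1/2) * Gfun ν ν t) ∂volume := by
    refine integral_congr_ae (ae_of_all _ (fun t => ?_))
    exact sq_cdf_diff_eq μ ν t
  rw [heq, integral_sub h12 h3', integral_sub h1 h2', integral_const_mul, integral_const_mul,
    Gfun_integral μ ν hμ hν, Gfun_integral μ μ hμ hμ, Gfun_integral ν ν hν hν]

lemma cdf_eq_of_ae (h : ∀ᵐ t : ℝ, cdf μ t = cdf ν t) : ∀ t, cdf μ t = cdf ν t := by
  intro t
  have hne : ∀ n : ℕ, (Ioo t (t + 1/(n+1)) ∩ {s | cdf μ s = cdf ν s}).Nonempty := by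
    intro n
    rw [Set.nonempty_iff_ne_empty]
    intro hemp
    have hsub : Ioo t (t + 1/(n+1)) ⊆ {s | cdf μ s = cdf ν s}ᶜ := by
      intro s hs hmem
      exact absurd (Set.mem_inter hs hmem) (by rw [hemp]; exact notMem_empty s)
    have h0 : volume (Ioo t (t + 1/(n+1))) = 0 :=
      measure_mono_null hsub h
    rw [Real.volume_Ioo] at h0
    have hpos : (0:ℝ) < 1/((n:ℝ)+1) := by positivity
    simp only [add_sub_cancel_left] at h0
    rw [ENNReal.ofReal_eq_zero] at h0
    linarith
  have hne' : ∀ n : ℕ, ∃ s, s ∈ Ioo t (t + 1/(n+1)) ∧ cdf μ s = cdf ν s := by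
    intro n; obtain ⟨s, hs⟩ := hne n; exact ⟨s, hs.1, hs.2⟩
  choose u hu1 hu2 using hne'
  have htend : Filter.Tendsto u atTop (𝓝 t) := by
    have hb : Filter.Tendsto (fun n : ℕ => t + 1/((n:ℝ)+1)) atTop (𝓝 t) := by
      have h0 : Filter.Tendsto (fun n : ℕ => 1/((n:ℝ)+1)) atTop (𝓝 0) :=
        tendsto_one_div_add_atTop_nhds_zero_nat
      simpa using tendsto_const_nhds.add h0
    refine tendsto_of_tendsto_of_tendsto_of_le_of_le tendsto_const_nhds hb ?_ ?_
    · intro n; exact (hu1 n).1.le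
    · intro n; exact (hu1 n).2.le
  have htend' : Filter.Tendsto u atTop (𝓝[>] t) :=
    tendsto_nhdsWithin_of_tendsto_nhds_of_eventually_within u htend
      (Filter.Eventually.of_forall (fun n => (hu1 n).1))
  have hμc : Filter.Tendsto (fun n => cdf μ (u n)) atTop (𝓝 (cdf μ t)) :=
    (((cdf μ).right_continuous t).mono_left
      (nhdsWithin_mono t Ioi_subset_Ici_self)).comp htend'
  have hνc : Filter.Tendsto (fun n => cdf ν (u n)) atTop (𝓝 (cdf ν t)) :=
    (((cdf ν).right_continuous t).mono_left
      (nhdsWithin_mono t Ioi_subset_Ici_self)).comp htend'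
  refine tendsto_nhds_unique hμc ?_
  exact hνc.congr (fun n => (hu2 n).symm)

end MMDsec

section Aident

instance lambdaI_prob : IsProbabilityMeasure (volume.restrict (Ioo (0:ℝ) 1)) := by
  constructor
  rw [Measure.restrict_apply_univ, Real.volume_Ioo]
  norm_num

variable (μ : Measure ℝ) [IsProbabilityMeasure μ]

lemma A_identity (hμ1 : Integrable (fun x : ℝ => |x|) μ)
    (hμid : Integrable (fun x : ℝ => x) μ) :
    ∫ s in Ioo (0:ℝ) 1, (1 - 2*s) * Quant μ s
      = -(1/2) * ∫ x, hfun μ x ∂μ := by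
  set I : Set ℝ := Ioo (0:ℝ) 1 with hI
  set lI : Measure ℝ := volume.restrict I with hlI
  set Q : ℝ → ℝ := Quant μ with hQ
  set P : Measure (ℝ × ℝ) := lI.prod lI with hP
  haveI : IsProbabilityMeasure lI := lambdaI_prob
  have hQae : AEMeasurable Q lI := quant_aemeasurable μ
  have hQint : Integrable Q lI := integrable_quant_comp μ (fun x => x) hμid
  have hQabs : Integrable (fun s => |Q s|) lI := integrable_quant_comp μ (fun x => |x|) hμ1
  have hmapfst : P.map Prod.fst = lI := by rw [hP, Measure.map_fst_prod]; simp
  have hmapsnd : P.map Prod.snd = lI := by rw [hP, Measure.map_snd_prod]; simp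
  have hQ1 : AEMeasurable (fun p : ℝ × ℝ => Q p.1) P :=
    AEMeasurable.comp_aemeasurable' (by rw [hmapfst]; exact hQae) measurable_fst.aemeasurable
  have hQ2 : AEMeasurable (fun p : ℝ × ℝ => Q p.2) P :=
    AEMeasurable.comp_aemeasurable' (by rw [hmapsnd]; exact hQae) measurable_snd.aemeasurable
  have hQ1i : Integrable (fun p : ℝ × ℝ => Q p.1) P :=
    (integrable_map_measure (g := Q) (f := Prod.fst)
      (by rw [hmapfst]; exact hQint.aestronglyMeasurable)
      measurable_fst.aemeasurable).1 (by rwa [hmapfst])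
  have hQ2i : Integrable (fun p : ℝ × ℝ => Q p.2) P :=
    (integrable_map_measure (g := Q) (f := Prod.snd)
      (by rw [hmapsnd]; exact hQint.aestronglyMeasurable)
      measurable_snd.aemeasurable).1 (by rwa [hmapsnd])
  have hQ1ai : Integrable (fun p : ℝ × ℝ => |Q p.1|) P :=
    (integrable_map_measure (g := fun s => |Q s|) (f := Prod.fst)
      (by rw [hmapfst]; exact hQabs.aestronglyMeasurable)
      measurable_fst.aemeasurable).1 (by rwa [hmapfst])
  have hQ2ai : Integrable (fun p : ℝ × ℝ => |Q p.2|) P :=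
    (integrable_map_measure (g := fun s => |Q s|) (f := Prod.snd)
      (by rw [hmapsnd]; exact hQabs.aestronglyMeasurable)
      measurable_snd.aemeasurable).1 (by rwa [hmapsnd])
  -- the set S and the two pieces
  set S : Set (ℝ × ℝ) := {p | p.1 ≤ p.2} with hS
  have hSm : MeasurableSet S := measurableSet_le measurable_fst measurable_snd
  set f1 : ℝ × ℝ → ℝ := S.indicator (fun p => Q p.1) with hf1
  set f2 : ℝ × ℝ → ℝ := Sᶜ.indicator (fun p => Q p.2) with hf2
  have hf1i : Integrable f1 P := by
    refine Integrable.mono' hQ1ai (hQ1.indicator hSm).aestronglyMeasurable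
      (ae_of_all _ (fun p => ?_))
    rw [Real.norm_eq_abs]
    calc |f1 p| ≤ ‖Q p.1‖ := by
          simpa [hf1] using norm_indicator_le_norm_self (fun p : ℝ × ℝ => Q p.1) p
    _ = |Q p.1| := rfl
  have hf2i : Integrable f2 P := by
    refine Integrable.mono' hQ2ai (hQ2.indicator hSm.compl).aestronglyMeasurable
      (ae_of_all _ (fun p => ?_))
    rw [Real.norm_eq_abs]
    calc |f2 p| ≤ ‖Q p.2‖ := by
          simpa [hf2] using norm_indicator_le_norm_self (fun p : ℝ × ℝ => Q p.2) p
    _ = |Q p.2| := rfl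
  -- a.e. membership in I × I
  have haemem : ∀ᵐ p ∂P, p.1 ∈ I ∧ p.2 ∈ I := by
    have h1 : P ((Iᶜ ×ˢ (univ : Set ℝ)) ∪ ((univ : Set ℝ) ×ˢ Iᶜ)) = 0 := by
      refine measure_union_null ?_ ?_
      · rw [hP, Measure.prod_prod]
        have : lI Iᶜ = 0 := by
          rw [hlI, Measure.restrict_apply' measurableSet_Ioo]
          simp [hI]
        rw [this, zero_mul]
      · rw [hP, Measure.prod_prod]
        have : lI Iᶜ = 0 := by
          rw [hlI, Measure.restrict_apply' measurableSet_Ioo]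
          simp [hI]
        rw [this, mul_zero]
    refine (ae_iff.2 ?_)
    refine measure_mono_null (fun p hp => ?_) h1
    simp only [mem_setOf_eq, not_and_or] at hp
    rcases hp with hp | hp
    · exact Or.inl ⟨hp, mem_univ _⟩
    · exact Or.inr ⟨mem_univ _, hp⟩
  -- pointwise identity a.e.
  have hpt : ∀ᵐ p ∂P, |Q p.1 - Q p.2| = Q p.1 + Q p.2 - 2 * (f1 p + f2 p) := by
    refine haemem.mono (fun p hp => ?_)
    by_cases h : p.1 ≤ p.2
    · have hQle : Q p.1 ≤ Q p.2 := quant_monotoneOn μ hp.1 hp.2 h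
      have hmem : p ∈ S := h
      rw [hf1, hf2, indicator_of_mem hmem, indicator_of_notMem (by simpa using hmem),
        abs_of_nonpos (by linarith)]
      ring
    · have hle : p.2 ≤ p.1 := (not_le.1 h).le
      have hQle : Q p.2 ≤ Q p.1 := quant_monotoneOn μ hp.2 hp.1 hle
      have hmem : p ∈ Sᶜ := by simpa [hS] using h
      rw [hf1, hf2, indicator_of_notMem (by simpa [hS] using h), indicator_of_mem hmem,
        abs_of_nonneg (by linarith)]
      ring
  -- the double integral identity
  have hEint : ∫ p, |Q p.1 - Q p.2| ∂P
      = (∫ p, Q p.1 ∂P) + (∫ p, Q p.2 ∂P) - 2 * ((∫ p, f1 p ∂P) + (∫ p, f2 p ∂P)) := by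
    rw [integral_congr_ae hpt]
    have hsum : Integrable (fun p : ℝ × ℝ => Q p.1 + Q p.2) P := hQ1i.add hQ2i
    have h2f : Integrable (fun p => (2:ℝ) * (f1 p + f2 p)) P := ((hf1i.add hf2i).const_mul 2)
    rw [integral_sub hsum h2f, integral_add hQ1i hQ2i, integral_const_mul,
      integral_add hf1i hf2i]
  -- compute the four integrals
  have hI1 : ∫ p, Q p.1 ∂P = ∫ s, Q s ∂lI := by
    rw [hP, integral_prod _ hQ1i]
    refine integral_congr_ae (ae_of_all _ (fun s => ?_))
    simp [integral_const]
  have hI2 : ∫ p, Q p.2 ∂P = ∫ s, Q s ∂lI := by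
    rw [hP, integral_prod_symm _ hQ2i]
    refine integral_congr_ae (ae_of_all _ (fun t => ?_))
    simp [integral_const]
  have hIf1 : ∫ p, f1 p ∂P = ∫ s, (1 - s) * Q s ∂lI := by
    rw [hP, integral_prod _ hf1i]
    refine integral_congr_ae ((ae_restrict_mem measurableSet_Ioo).mono (fun s hs => ?_))
    show ∫ t, f1 (s, t) ∂lI = (1 - s) * Q s
    have hfun_eq : (fun t => f1 (s, t)) = (Ici s).indicator (fun _ => Q s) := by
      funext t
      by_cases h : s ≤ t
      · rw [indicator_of_mem (mem_Ici.2 h), hf1, indicator_of_mem (by exact h)]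
      · rw [indicator_of_notMem (by simpa using h), hf1,
          indicator_of_notMem (by simpa [hS] using h)]
    rw [hfun_eq, integral_indicator measurableSet_Ici, hlI,
      Measure.restrict_restrict measurableSet_Ici, setIntegral_const]
    have hset : Ici s ∩ I = Ico s 1 := by
      ext z
      simp only [mem_inter_iff, mem_Ici, hI, mem_Ioo, mem_Ico]
      constructor
      · rintro ⟨h1, _, h3⟩; exact ⟨h1, h3⟩
      · rintro ⟨h1, h3⟩; exact ⟨h1, lt_of_lt_of_le hs.1 h1, h3⟩
    rw [hset, measureReal_def, Real.volume_Ico, ENNReal.toReal_ofReal (by linarith [hs.2]), smul_eq_mul]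
  have hIf2 : ∫ p, f2 p ∂P = ∫ t, (1 - t) * Q t ∂lI := by
    rw [hP, integral_prod_symm _ hf2i]
    refine integral_congr_ae ((ae_restrict_mem measurableSet_Ioo).mono (fun t ht => ?_))
    show ∫ s, f2 (s, t) ∂lI = (1 - t) * Q t
    have hfun_eq : (fun s => f2 (s, t)) = (Ioi t).indicator (fun _ => Q t) := by
      funext s
      by_cases h : t < s
      · rw [indicator_of_mem (mem_Ioi.2 h), hf2,
          indicator_of_mem (by simpa [hS] using not_le.2 h)]
      · rw [indicator_of_notMem (by simpa using h), hf2,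
          indicator_of_notMem (by simpa [hS] using not_lt.1 h)]
    rw [hfun_eq, integral_indicator measurableSet_Ioi, hlI,
      Measure.restrict_restrict measurableSet_Ioi, setIntegral_const]
    have hset : Ioi t ∩ I = Ioo t 1 := by
      ext z
      simp only [mem_inter_iff, mem_Ioi, hI, mem_Ioo]
      constructor
      · rintro ⟨h1, _, h3⟩; exact ⟨h1, h3⟩
      · rintro ⟨h1, h3⟩; exact ⟨h1, lt_trans ht.1 h1, h3⟩
    rw [hset, measureReal_def, Real.volume_Ioo, ENNReal.toReal_ofReal (by linarith [ht.2]), smul_eq_mul]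
  -- relate D to the double integral
  have hDopen : ∫ x, hfun μ x ∂μ = ∫ p, |Q p.1 - Q p.2| ∂P := by
    have step1 : ∫ x, hfun μ x ∂μ = ∫ s, hfun μ (Q s) ∂lI :=
      (integral_quant μ (hfun μ) (lipschitz_hfun μ hμ1).continuous.aestronglyMeasurable).symm
    have step2 : ∀ s, hfun μ (Q s) = ∫ t, |Q s - Q t| ∂lI := by
      intro s
      rw [hfun]
      exact (integral_quant μ (fun y => |Q s - y|)
        ((continuous_const.sub continuous_id).abs).aestronglyMeasurable).symm
    have hintP : Integrable (fun p : ℝ × ℝ => |Q p.1 - Q p.2|) P := by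
      refine Integrable.mono' (hQ1ai.add hQ2ai)
        ((hQ1.sub hQ2).aestronglyMeasurable.norm.congr (ae_of_all _ (fun p => (Real.norm_eq_abs _)))) (ae_of_all _ (fun p => ?_))
      rw [Real.norm_eq_abs, abs_abs]
      exact abs_sub _ _
    rw [step1]
    simp_rw [step2]
    rw [hP, integral_prod _ (by rw [← hP]; exact hintP)]
  -- integrability of pieces on lI
  have honemq : Integrable (fun s => (1 - s) * Q s) lI := by
    refine Integrable.mono' hQabs
      ((measurable_const.sub measurable_id).aemeasurable.mul hQae).aestronglyMeasurable
      ?_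
    refine (ae_restrict_mem measurableSet_Ioo).mono (fun s hs => ?_)
    rw [Real.norm_eq_abs, abs_mul]
    have : |1 - s| ≤ 1 := by
      rw [abs_le]; constructor <;> [linarith [hs.2]; linarith [hs.1]]
    calc |1 - s| * |Q s| ≤ 1 * |Q s| := by
          exact mul_le_mul_of_nonneg_right this (abs_nonneg _)
    _ = |Q s| := one_mul _
  -- final assembly
  have hfinal : ∫ s, (1 - 2*s) * Q s ∂lI
      = 2 * (∫ s, (1 - s) * Q s ∂lI) - ∫ s, Q s ∂lI := by
    rw [← integral_const_mul, ← integral_sub (honemq.const_mul 2) hQint]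
    refine integral_congr_ae (ae_of_all _ (fun s => ?_))
    ring
  rw [hfinal, hDopen, hEint, hI1, hI2, hIf1, hIf2]
  ring

end Aident

/-- The functional `F_ν` on functions on `(0,1)`. -/
noncomputable def Fnu (ν : Measure ℝ) (u : ℝ → ℝ) : ℝ :=
  ∫ s in Ioo (0 : ℝ) 1,
    ((1 - 2 * s) * u s + ∫ t in Ioo (0 : ℝ) 1, |u s - Quant ν t|)

/-- `MMD²_K(μ,ν)` for the negative distance kernel `K(x,y) = -|x-y|`. -/
noncomputable def MMD2 (μ ν : Measure ℝ) : ℝ :=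
  (1 / 2) * (∫ x, (∫ y, -|x - y| ∂μ) ∂μ) - (∫ x, (∫ y, -|x - y| ∂ν) ∂μ) +
    (1 / 2) * (∫ x, (∫ y, -|x - y| ∂ν) ∂ν)

lemma Fnu_quant_eq (ν α : Measure ℝ) [IsProbabilityMeasure ν] [IsProbabilityMeasure α]
    (hν1 : Integrable (fun x : ℝ => |x|) ν)
    (hα1 : Integrable (fun x : ℝ => |x|) α) (hαid : Integrable (fun x : ℝ => x) α) :
    Fnu ν (Quant α) = (∫ s in Ioo (0:ℝ) 1, (1 - 2*s) * Quant α s) + ∫ x, hfun ν x ∂α := by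
  have hinner : ∀ x : ℝ, (∫ t in Ioo (0:ℝ) 1, |x - Quant ν t|) = hfun ν x := by
    intro x
    rw [hfun]
    exact integral_quant ν (fun y => |x - y|)
      ((continuous_const.sub continuous_id).abs).aestronglyMeasurable
  have hQae : AEMeasurable (Quant α) (volume.restrict (Ioo (0:ℝ) 1)) := quant_aemeasurable α
  have hQabs : Integrable (fun s => |Quant α s|) (volume.restrict (Ioo (0:ℝ) 1)) :=
    integrable_quant_comp α (fun x => |x|) hα1
  have hg1 : Integrable (fun s => (1 - 2*s) * Quant α s) (volume.restrict (Ioo (0:ℝ) 1)) := by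
    refine Integrable.mono' hQabs
      ((measurable_const.sub (measurable_id.const_mul 2)).aemeasurable.mul
        hQae).aestronglyMeasurable ?_
    refine (ae_restrict_mem measurableSet_Ioo).mono (fun s hs => ?_)
    rw [Real.norm_eq_abs, abs_mul]
    have h1 : |1 - 2*s| ≤ 1 := by
      rw [abs_le]; constructor <;> [linarith [hs.2]; linarith [hs.1]]
    calc |1 - 2*s| * |Quant α s| ≤ 1 * |Quant α s| :=
          mul_le_mul_of_nonneg_right h1 (abs_nonneg _)
    _ = |Quant α s| := one_mul _
  have hg2 : Integrable (fun s => hfun ν (Quant α s)) (volume.restrict (Ioo (0:ℝ) 1)) :=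
    integrable_quant_comp α (hfun ν) (integrable_hfun α ν hα1 hν1)
  have : Fnu ν (Quant α)
      = ∫ s in Ioo (0:ℝ) 1, ((1 - 2*s) * Quant α s + hfun ν (Quant α s)) := by
    rw [Fnu]
    refine integral_congr_ae (ae_of_all _ (fun s => ?_))
    simp only [hinner]
  rw [this, integral_add hg1 hg2,
    integral_quant α (hfun ν) (lipschitz_hfun ν hν1).continuous.aestronglyMeasurable]

/-- `Q_ν` minimizes `F_ν`, `MMD²_K(μ,ν) = F_ν(Q_μ) - F_ν(Q_ν) ≥ 0`, with equality
iff `μ = ν`. -/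
theorem Fnu_minimized_at_target (μ ν : Measure ℝ)
    [IsProbabilityMeasure μ] [IsProbabilityMeasure ν]
    (hμ : Integrable (fun x : ℝ => x ^ 2) μ)
    (hν : Integrable (fun x : ℝ => x ^ 2) ν) :
    Fnu ν (Quant ν) ≤ Fnu ν (Quant μ) ∧
    MMD2 μ ν = Fnu ν (Quant μ) - Fnu ν (Quant ν) ∧
    0 ≤ MMD2 μ ν ∧ (MMD2 μ ν = 0 ↔ μ = ν) := by
  have hμ1 := integrable_abs_of_sq μ hμ
  have hν1 := integrable_abs_of_sq ν hν
  have hμid := integrable_id_of_sq μ hμ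
  have hνid := integrable_id_of_sq ν hν
  have hFμ : Fnu ν (Quant μ) = -(1/2) * (∫ x, hfun μ x ∂μ) + ∫ x, hfun ν x ∂μ := by
    rw [Fnu_quant_eq ν μ hν1 hμ1 hμid, A_identity μ hμ1 hμid]
  have hFν : Fnu ν (Quant ν) = (1/2) * (∫ x, hfun ν x ∂ν) := by
    rw [Fnu_quant_eq ν ν hν1 hν1 hνid, A_identity ν hν1 hνid]
    ring
  have hMMD : MMD2 μ ν
      = (∫ x, hfun ν x ∂μ) - (1/2) * (∫ x, hfun μ x ∂μ) - (1/2) * (∫ x, hfun ν x ∂ν) := by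
    rw [MMD2]
    exact MMD2_eq_combination μ ν
  have heqdiff : MMD2 μ ν = Fnu ν (Quant μ) - Fnu ν (Quant ν) := by
    rw [hMMD, hFμ, hFν]; ring
  have hsq : MMD2 μ ν = ∫ t, (cdf μ t - cdf ν t) ^ 2 ∂volume := by
    rw [MMD2]
    exact MMD2_eq_integral_sq μ ν hμ1 hν1
  have hnonneg : 0 ≤ MMD2 μ ν := by
    rw [hsq]
    exact integral_nonneg (fun t => sq_nonneg _)
  refine ⟨by linarith, heqdiff, hnonneg, ?_⟩
  constructor
  · intro h0
    have hzero : ∫ t, (cdf μ t - cdf ν t) ^ 2 ∂volume = 0 := by rw [← hsq, h0]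
    have hae : (fun t => (cdf μ t - cdf ν t) ^ 2) =ᵐ[volume] 0 :=
      (integral_eq_zero_iff_of_nonneg (fun t => sq_nonneg _)
        (sq_cdf_diff_integrable μ ν hμ1 hν1)).1 hzero
    have hae' : ∀ᵐ t : ℝ, cdf μ t = cdf ν t := by
      refine hae.mono (fun t ht => ?_)
      have h2 : (cdf μ t - cdf ν t) ^ 2 = 0 := ht
      have h3 : cdf μ t - cdf ν t = 0 := by
        exact pow_eq_zero_iff two_ne_zero |>.1 h2
      linarith
    have hall := cdf_eq_of_ae μ ν hae'
    refine Measure.ext_of_Iic μ ν (fun a => ?_)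
    rw [← ofReal_cdf μ a, ← ofReal_cdf ν a, hall a]
  · intro h
    subst h
    rw [hsq]
    simp
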